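/- Downward closedness of the SAT region fails in the DC power flow model: in the triangle network with unit reactances x_{01} = x_{02} = x_{12} = 1, line capacities u_{01} = u_{02} = 10 and u_{12} = 1/2, generator capacity P_0 = 20 at node 0, the demand vector (d_1, d_2) = (6, 6) is SAT, while the componentwise smaller demand vector (6, 3) is UNSAT. -/
import Mathlib


/-- SAT predicate for the triangle network: generator at node `0` with capacity
`P0`, loads `d1`, `d2` at nodes `1`, `2`, reactances `x01, x02, x12`, line
capacities `u01, u02, u12`. There must exist flows, phases and generation
satisfying flow conservation, the DC phase conditions and all capacity bounds. -/
def TriSat (x01 x02 x12 u01 u02 u12 P0 d1 d2 : ℝ) : Prop :=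
  ∃ f01 f02 f12 θ0 θ1 θ2 p0 : ℝ,
    0 ≤ p0 ∧ p0 ≤ P0 ∧
    f01 + f02 = p0 ∧
    -f01 + f12 = -d1 ∧
    -f02 - f12 = -d2 ∧
    θ0 - θ1 = x01 * f01 ∧
    θ0 - θ2 = x02 * f02 ∧
    θ1 - θ2 = x12 * f12 ∧
    |f01| ≤ u01 ∧ |f02| ≤ u02 ∧ |f12| ≤ u12

/-- **Failure of downward closedness in the DC model:** in the triangle with
unit reactances, `u01 = u02 = 10`, `u12 = 1/2`, `P0 = 20`, demand `(6,6)` is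
SAT while the componentwise smaller demand `(6,3)` is UNSAT. -/
theorem stmt_9 :
    TriSat 1 1 1 10 10 (1/2) 20 6 6 ∧ ¬ TriSat 1 1 1 10 10 (1/2) 20 6 3 := by
  constructor
  · refine ⟨6, 6, 0, 6, 0, 0, 12, by norm_num, by norm_num, by norm_num,
      by norm_num, by norm_num, by norm_num, by norm_num, by norm_num,
      ?_, ?_, ?_⟩ <;> simp [abs_le] <;> norm_num
  · rintro ⟨f01, f02, f12, θ0, θ1, θ2, p0, _, _, _, h1, h2, e1, e2, e3, _, _, h12⟩
    have : f12 = -1 := by linarith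
    rw [this] at h12
    rw [abs_le] at h12
    linarith [h12.1]
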